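/- (Cantor–Bernstein for matchings) Let G be a bipartite simple graph with bipartition (X, Y). If there exists a matching covering every vertex of X and a matching covering every vertex of Y, then G admits a perfect matching. -/

import Mathlib

/-- A matching of `G` as a set of pairwise disjoint edges. -/
def IsMatchingSet {V : Type*} (G : SimpleGraph V) (M : Set (Sym2 V)) : Prop :=
  M ⊆ G.edgeSet ∧ M.Pairwise fun e f => ∀ v : V, v ∈ e → v ∉ f

/-- Cantor–Bernstein for matchings: if a bipartite graph with bipartition
`(X, Y)` has a matching covering all of `X` and a matching covering all of `Y`,
then it has a perfect matching. -/
theorem exists_perfect_matching_of_matchings_covering_both_sides {V : Type*}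
    (G : SimpleGraph V) (X Y : Set V) (hdisj : Disjoint X Y)
    (hunion : X ∪ Y = Set.univ)
    (hbip : ∀ ⦃u v : V⦄, G.Adj u v → (u ∈ X ∧ v ∈ Y) ∨ (u ∈ Y ∧ v ∈ X))
    (M M' : Set (Sym2 V)) (hM : IsMatchingSet G M) (hM' : IsMatchingSet G M')
    (hX : ∀ x ∈ X, ∃ e ∈ M, x ∈ e) (hY : ∀ y ∈ Y, ∃ e ∈ M', y ∈ e) :
    ∃ N : Set (Sym2 V), IsMatchingSet G N ∧ ∀ v : V, ∃ e ∈ N, v ∈ e := by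
  classical
  have hdXY : ∀ {v : V}, v ∈ X → v ∈ Y → False := fun hx hy =>
    Set.disjoint_left.mp hdisj hx hy
  -- choose partner functions
  have hfex : ∀ x : V, ∃ y : V, x ∈ X → y ∈ Y ∧ s(x, y) ∈ M := by
    intro x
    by_cases hx : x ∈ X
    · obtain ⟨e, heM, hxe⟩ := hX x hx
      have hedge : e ∈ G.edgeSet := hM.1 heM
      induction e with
      | _ a b =>
        have hadj : G.Adj a b := hedge
        rw [Sym2.mem_iff] at hxe
        rcases hbip hadj with ⟨haX, hbY⟩ | ⟨haY, hbX⟩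
        · rcases hxe with rfl | rfl
          · exact ⟨b, fun _ => ⟨hbY, heM⟩⟩
          · exact absurd hbY (fun h => hdXY hx h)
        · rcases hxe with rfl | rfl
          · exact absurd haY (fun h => hdXY hx h)
          · exact ⟨a, fun _ => ⟨haY, by rwa [Sym2.eq_swap]⟩⟩
    · exact ⟨x, fun h => absurd h hx⟩
  have hgex : ∀ y : V, ∃ x : V, y ∈ Y → x ∈ X ∧ s(x, y) ∈ M' := by
    intro y
    by_cases hy : y ∈ Y
    · obtain ⟨e, heM, hye⟩ := hY y hy
      have hedge : e ∈ G.edgeSet := hM'.1 heM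
      induction e with
      | _ a b =>
        have hadj : G.Adj a b := hedge
        rw [Sym2.mem_iff] at hye
        rcases hbip hadj with ⟨haX, hbY⟩ | ⟨haY, hbX⟩
        · rcases hye with rfl | rfl
          · exact absurd haX (fun h => hdXY h hy)
          · exact ⟨a, fun _ => ⟨haX, heM⟩⟩
        · rcases hye with rfl | rfl
          · exact ⟨b, fun _ => ⟨hbX, by rwa [Sym2.eq_swap]⟩⟩
          · exact absurd hbX (fun h => hdXY h hy)
    · exact ⟨y, fun h => absurd h hy⟩
  choose f hf using hfex
  choose g hg using hgex
  -- least fixed point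
  have hmono : Monotone fun A : Set V => X \ g '' (Y \ f '' A) := by
    intro A B hAB
    exact Set.diff_subset_diff_right
      (Set.image_mono (Set.diff_subset_diff_right (Set.image_mono hAB)))
  set F : Set V →o Set V := ⟨fun A => X \ g '' (Y \ f '' A), hmono⟩ with hF
  set S : Set V := OrderHom.lfp F with hSdef
  have hSfix : X \ g '' (Y \ f '' S) = S := OrderHom.map_lfp F
  have hSX : S ⊆ X := by rw [← hSfix]; exact Set.diff_subset
  have hSnot : ∀ x ∈ S, x ∉ g '' (Y \ f '' S) := by
    intro x hx
    rw [← hSfix] at hx; exact hx.2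
  set N : Set (Sym2 V) :=
    ((fun x => s(x, f x)) '' S) ∪ ((fun y => s(g y, y)) '' (Y \ f '' S)) with hN
  have hfS : ∀ x ∈ S, f x ∈ Y ∧ s(x, f x) ∈ M := fun x hx => hf x (hSX hx)
  have hgS : ∀ y ∈ Y \ f '' S, g y ∈ X ∧ s(g y, y) ∈ M' := fun y hy => hg y hy.1
  -- key disjointness between the two families
  have key : ∀ x ∈ S, ∀ y ∈ Y \ f '' S, ∀ v : V, v ∈ s(x, f x) → v ∉ s(g y, y) := by
    intro x hx y hy v hv1 hv2
    rw [Sym2.mem_iff] at hv1 hv2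
    rcases hv1 with rfl | rfl
    · rcases hv2 with h | rfl
      · exact hSnot v hx ⟨y, hy, h.symm⟩
      · exact hdXY (hSX hx) hy.1
    · rcases hv2 with h | h
      · exact hdXY (hgS y hy).1 (h ▸ (hfS x hx).1)
      · exact hy.2 ⟨x, hx, h⟩
  refine ⟨N, ⟨?_, ?_⟩, ?_⟩
  · -- N ⊆ edgeSet
    rintro e (⟨x, hx, rfl⟩ | ⟨y, hy, rfl⟩)
    · exact hM.1 (hfS x hx).2
    · exact hM'.1 (hgS y hy).2
  · -- pairwise disjoint
    rintro e1 (⟨x1, hx1, rfl⟩ | ⟨y1, hy1, rfl⟩) e2 (⟨x2, hx2, rfl⟩ | ⟨y2, hy2, rfl⟩)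
        hne v hv1 hv2
    · exact hM.2 (hfS x1 hx1).2 (hfS x2 hx2).2 hne v hv1 hv2
    · exact key x1 hx1 y2 hy2 v hv1 hv2
    · exact key x2 hx2 y1 hy1 v hv2 hv1
    · exact hM'.2 (hgS y1 hy1).2 (hgS y2 hy2).2 hne v hv1 hv2
  · -- covers everything
    intro v
    have hv : v ∈ X ∪ Y := hunion ▸ Set.mem_univ v
    rcases hv with hvX | hvY
    · by_cases hvS : v ∈ S
      · exact ⟨s(v, f v), Or.inl ⟨v, hvS, rfl⟩, Sym2.mem_mk_left _ _⟩
      · have : v ∈ g '' (Y \ f '' S) := by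
          by_contra h
          exact hvS (hSfix ▸ (⟨hvX, h⟩ : v ∈ X \ g '' (Y \ f '' S)))
        obtain ⟨y, hy, rfl⟩ := this
        exact ⟨s(g y, y), Or.inr ⟨y, hy, rfl⟩, Sym2.mem_mk_left _ _⟩
    · by_cases hvf : v ∈ f '' S
      · obtain ⟨x, hx, rfl⟩ := hvf
        exact ⟨s(x, f x), Or.inl ⟨x, hx, rfl⟩, Sym2.mem_mk_right _ _⟩
      · exact ⟨s(g v, v), Or.inr ⟨v, ⟨hvY, hvf⟩, rfl⟩, Sym2.mem_mk_right _ _⟩
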